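/- Let n ≥ 3. For every integer k with 1 ≤ k ≤ ⌊(n−1)/2⌋ there exists an order-n Latin square whose inner distance equals exactly k. -/
import Mathlib


/-- Distance between two symbols of `ZMod n`: the minimum of the two cyclic differences. -/
def zdist {n : ℕ} (a b : ZMod n) : ℕ := min (a - b).val (b - a).val

/-- An order-`n` Latin square: every row and every column is injective. -/
def IsLatin (n : ℕ) (L : Fin n → Fin n → ZMod n) : Prop :=
  (∀ i, Function.Injective (L i)) ∧ ∀ j, Function.Injective fun i => L i j

/-- The inner distance of a square: the minimum of `zdist` over all pairs of
horizontally or vertically adjacent cells. -/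
noncomputable def innerDist (n : ℕ) (L : Fin n → Fin n → ZMod n) : ℕ :=
  sInf { d : ℕ |
    (∃ i : Fin n, ∃ j : ℕ, ∃ hj : j + 1 < n,
      d = zdist (L i ⟨j, Nat.lt_of_succ_lt hj⟩) (L i ⟨j + 1, hj⟩)) ∨
    (∃ j : Fin n, ∃ i : ℕ, ∃ hi : i + 1 < n,
      d = zdist (L ⟨i, Nat.lt_of_succ_lt hi⟩ j) (L ⟨i + 1, hi⟩ j)) }

def zf (n k t : ℕ) : ZMod n := ((t / (n / Nat.gcd k n) + (t % (n / Nat.gcd k n)) * k : ℕ) : ZMod n)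

lemma hm2 (n k : ℕ) (hn : 3 ≤ n) (hk1 : 1 ≤ k) (hk2 : k ≤ (n - 1) / 2) :
    2 ≤ n / Nat.gcd k n := by
  have hd : Nat.gcd k n ≤ k := Nat.le_of_dvd hk1 (Nat.gcd_dvd_left _ _)
  have hpos : 0 < Nat.gcd k n := Nat.gcd_pos_of_pos_left n hk1
  exact (Nat.le_div_iff_mul_le hpos).mpr (by omega)

lemma key (d m k' : ℕ) (hd : 0 < d) (hm : 2 ≤ m) (hcop : Nat.Coprime k' m)
    (q1 r1 q2 r2 : ℕ) (hq1 : q1 < d) (hr1 : r1 < m) (hq2 : q2 < d) (hr2 : r2 < m)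
    (hmod : (q1 + r1 * (d * k')) ≡ (q2 + r2 * (d * k')) [MOD d * m]) :
    q1 = q2 ∧ r1 = r2 := by
  have H : ((d : ℤ) * m) ∣ ((q2 : ℤ) + r2 * (d * k')) - ((q1 : ℤ) + r1 * (d * k')) := by
    have := hmod.dvd
    push_cast at this ⊢
    convert this using 2 <;> ring
  have h1 : (d : ℤ) ∣ (q2 : ℤ) - q1 := by
    obtain ⟨e, he⟩ := (Dvd.intro m rfl : (d:ℤ) ∣ (d:ℤ)*m).trans H
    exact ⟨e - r2 * k' + r1 * k', by linear_combination he⟩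
  have hq : q1 = q2 := by
    have := Int.eq_zero_of_abs_lt_dvd h1 (by rw [abs_sub_lt_iff]; omega)
    omega
  refine ⟨hq, ?_⟩
  have h3 : (m : ℤ) ∣ ((r2 : ℤ) - r1) * k' := by
    obtain ⟨e, he⟩ := H
    refine ⟨e, mul_left_cancel₀ (show (d:ℤ) ≠ 0 by omega) ?_⟩
    have hqq : (q1 : ℤ) = q2 := by omega
    linear_combination he + hqq
  have h4 : (m : ℤ) ∣ ((r2 : ℤ) - r1) :=
    (Nat.isCoprime_iff_coprime.mpr hcop.symm).dvd_of_dvd_mul_right h3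
  have := Int.eq_zero_of_abs_lt_dvd h4 (by rw [abs_sub_lt_iff]; omega)
  omega

lemma zf_inj (n k : ℕ) (hn : 3 ≤ n) (hk1 : 1 ≤ k) (hk2 : k ≤ (n - 1) / 2) :
    ∀ s t, s < n → t < n → zf n k s = zf n k t → s = t := by
  intro s t hs ht h
  have hpos : 0 < Nat.gcd k n := Nat.gcd_pos_of_pos_left n hk1
  obtain ⟨m, hdm⟩ := (Nat.gcd_dvd_right k n)
  obtain ⟨k', hk'⟩ := (Nat.gcd_dvd_left k n)
  have hmeq : n / Nat.gcd k n = m := by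
    have := Nat.mul_div_cancel_left m hpos
    rwa [← hdm] at this
  have hm : 2 ≤ m := hmeq ▸ hm2 n k hn hk1 hk2
  have hcop : Nat.Coprime k' m := by
    have h0 := Nat.coprime_div_gcd_div_gcd (m := k) (n := n) hpos
    have e1 : k / Nat.gcd k n = k' := by
      have := Nat.mul_div_cancel_left k' hpos
      rwa [← hk'] at this
    rwa [e1, hmeq] at h0
  have hmod : (s / m + s % m * k) ≡ (t / m + t % m * k) [MOD n] := by
    have h' := h
    unfold zf at h'
    rw [hmeq] at h'
    exact (ZMod.natCast_eq_natCast_iff _ _ _).mp h'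
  have hmod' : (s / m + s % m * (Nat.gcd k n * k')) ≡ (t / m + t % m * (Nat.gcd k n * k')) [MOD Nat.gcd k n * m] := by
    rw [← hk', ← hdm]; exact hmod
  have hdm' : m * Nat.gcd k n = n := by rw [mul_comm]; exact hdm.symm
  have hsq : s / m < Nat.gcd k n := Nat.div_lt_of_lt_mul (by omega)
  have htq : t / m < Nat.gcd k n := Nat.div_lt_of_lt_mul (by omega)
  obtain ⟨h1, h2⟩ := key (Nat.gcd k n) m k' hpos hm hcop (s / m) (s % m) (t / m) (t % m)
    hsq (Nat.mod_lt _ (by omega)) htq (Nat.mod_lt _ (by omega)) hmod'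
  rw [← Nat.div_add_mod s m, ← Nat.div_add_mod t m, h1, h2]

lemma zf_diff (n k : ℕ) (hn : 3 ≤ n) (hk1 : 1 ≤ k) (hk2 : k ≤ (n - 1) / 2) :
    ∀ t, t + 1 < n →
      zf n k (t + 1) - zf n k t = (k : ZMod n) ∨
      zf n k (t + 1) - zf n k t = ((k + 1 : ℕ) : ZMod n) := by
  intro t ht
  have hpos : 0 < Nat.gcd k n := Nat.gcd_pos_of_pos_left n hk1
  set m := n / Nat.gcd k n with hmdef
  have hm : 2 ≤ m := hm2 n k hn hk1 hk2
  have hdmn : Nat.gcd k n * m = n := Nat.mul_div_cancel' (Nat.gcd_dvd_right k n)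
  have hmod : t % m < m := Nat.mod_lt _ (by omega)
  have hstep : t + 1 = m * (t / m) + (t % m + 1) := by
    have := Nat.div_add_mod t m; omega
  by_cases hcase : t % m + 1 < m
  · left
    have h1 : (t + 1) / m = t / m := by
      rw [hstep, Nat.mul_add_div (by omega), Nat.div_eq_of_lt hcase, Nat.add_zero]
    have h2 : (t + 1) % m = t % m + 1 := by
      rw [hstep, Nat.mul_add_mod, Nat.mod_eq_of_lt hcase]
    unfold zf
    rw [← hmdef, h1, h2]
    push_cast
    ring
  · right
    have hr : t % m + 1 = m := by omega
    have h1 : (t + 1) / m = t / m + 1 := by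
      rw [hstep, Nat.mul_add_div (by omega), hr, Nat.div_self (by omega)]
    have h2 : (t + 1) % m = 0 := by
      rw [hstep, Nat.mul_add_mod, hr, Nat.mod_self]
    have hmk : ((m * k : ℕ) : ZMod n) = 0 := by
      rw [ZMod.natCast_eq_zero_iff]
      obtain ⟨k', hk'⟩ := (Nat.gcd_dvd_left k n)
      refine ⟨k', ?_⟩
      rw [← hdmn]
      conv_lhs => rw [hk']
      ring
    have hrr : t % m = m - 1 := by omega
    unfold zf
    rw [← hmdef, h1, h2, hrr]
    push_cast [show 1 ≤ m by omega]
    push_cast at hmk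
    have : ((m:ZMod n) - 1) * k = m * k - k := by ring
    rw [this, hmk]
    ring

lemma zf_diff0 (n k : ℕ) (hn : 3 ≤ n) (hk1 : 1 ≤ k) (hk2 : k ≤ (n - 1) / 2) :
    zf n k 1 - zf n k 0 = (k : ZMod n) := by
  have hm : 2 ≤ n / Nat.gcd k n := hm2 n k hn hk1 hk2
  unfold zf
  rw [Nat.div_eq_of_lt (by omega), Nat.mod_eq_of_lt (by omega)]
  simp

lemma zdist_add_left {n : ℕ} (x a b : ZMod n) : zdist (x + a) (x + b) = zdist a b := by
  unfold zdist
  rw [add_sub_add_left_eq_sub, add_sub_add_left_eq_sub]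

lemma zdist_comm {n : ℕ} (a b : ZMod n) : zdist a b = zdist b a := by
  unfold zdist; rw [min_comm]

lemma zdist_eq (n : ℕ) (hn : 0 < n) (a b : ZMod n) (c : ℕ) (hc1 : 1 ≤ c) (hc2 : c < n)
    (h : a - b = (c : ZMod n)) : zdist a b = min c (n - c) := by
  haveI : NeZero n := ⟨hn.ne'⟩
  have hv1 : ((c : ZMod n)).val = c := ZMod.val_natCast_of_lt hc2
  have hba : b - a = ((n - c : ℕ) : ZMod n) := by
    have h2 : ((n - c : ℕ) : ZMod n) = -(c : ZMod n) := by
      rw [Nat.cast_sub (le_of_lt hc2), ZMod.natCast_self]; ring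
    rw [h2, ← h]; ring
  rw [zdist, h, hba, hv1, ZMod.val_natCast_of_lt (by omega)]


theorem stmt4 (n : ℕ) (hn : 3 ≤ n) (k : ℕ) (hk1 : 1 ≤ k) (hk2 : k ≤ (n - 1) / 2) :
    ∃ L : Fin n → Fin n → ZMod n, IsLatin n L ∧ innerDist n L = k := by
  have hn0 : 0 < n := by omega
  have h2k : 2 * k + 1 ≤ n := by omega
  refine ⟨fun i j => zf n k i.val + zf n k j.val, ⟨?_, ?_⟩, ?_⟩
  · intro i j1 j2 h
    have := zf_inj n k hn hk1 hk2 j1.val j2.val j1.isLt j2.isLt (by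
      exact add_left_cancel h)
    exact Fin.ext this
  · intro j i1 i2 h
    have := zf_inj n k hn hk1 hk2 i1.val i2.val i1.isLt i2.isLt (by
      exact add_right_cancel h)
    exact Fin.ext this
  · -- inner distance
    set L : Fin n → Fin n → ZMod n := fun i j => zf n k i.val + zf n k j.val with hL
    set S := { d : ℕ |
      (∃ i : Fin n, ∃ j : ℕ, ∃ hj : j + 1 < n,
        d = zdist (L i ⟨j, Nat.lt_of_succ_lt hj⟩) (L i ⟨j + 1, hj⟩)) ∨
      (∃ j : Fin n, ∃ i : ℕ, ∃ hi : i + 1 < n,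
        d = zdist (L ⟨i, Nat.lt_of_succ_lt hi⟩ j) (L ⟨i + 1, hi⟩ j)) } with hS
    have hzd : ∀ t : ℕ, (ht : t + 1 < n) →
        zdist (zf n k t) (zf n k (t + 1)) = k ∨
        zdist (zf n k t) (zf n k (t + 1)) = min (k + 1) (n - (k + 1)) := by
      intro t ht
      rcases zf_diff n k hn hk1 hk2 t ht with hd | hd
      · left
        rw [zdist_comm, zdist_eq n hn0 _ _ k hk1 (by omega) hd]
        omega
      · right
        rw [zdist_comm, zdist_eq n hn0 _ _ (k + 1) (by omega) (by omega) hd]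
    have hmem : k ∈ S := by
      rw [hS]
      left
      refine ⟨⟨0, hn0⟩, 0, by omega, ?_⟩
      rw [hL]
      simp only []
      rw [zdist_add_left, zdist_comm, zdist_eq n hn0 _ _ k hk1 (by omega) (zf_diff0 n k hn hk1 hk2)]
      omega
    have hlb : ∀ d ∈ S, k ≤ d := by
      intro d hd
      rw [hS] at hd
      rcases hd with ⟨i, j, hj, hd⟩ | ⟨j, i, hi, hd⟩
      · rw [hL] at hd
        simp only [] at hd
        rw [zdist_add_left] at hd
        rcases hzd j hj with h | h <;> omega
      · rw [hL] at hd
        simp only [] at hd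
        rw [show ∀ a b c : ZMod n, zdist (a + c) (b + c) = zdist a b from ?_] at hd
        · rcases hzd i hi with h | h <;> omega
        · intro a b c
          rw [add_comm a c, add_comm b c, zdist_add_left]
    have hne : S.Nonempty := ⟨k, hmem⟩
    have hgoal : innerDist n L = sInf S := by
      unfold innerDist
      rw [← hS]
    rw [hgoal]
    exact le_antisymm (Nat.sInf_le hmem) (hlb _ (Nat.sInf_mem hne))
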